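/- Let N be a bounded normal operator in a Krein space and λ a spectral point of two-sided positive type (λ ∈ σ₊(N) and λ̄ ∈ σ₊(N⁺)). Then ker(N - λ) = ker(N⁺ - λ̄). -/

import Mathlib

open Filter Topology ContinuousLinearMap

noncomputable section

variable {H : Type*} [NormedAddCommGroup H] [InnerProductSpace ℂ H] [CompleteSpace H]

def kadj (J T : H →L[ℂ] H) : H →L[ℂ] H := J ∘L (ContinuousLinearMap.adjoint T) ∘L J

def ApproxEig (T : H →L[ℂ] H) (l : ℂ) (x : ℕ → H) : Prop :=
  (∀ n, ‖x n‖ = 1) ∧ Tendsto (fun n => T (x n) - l • x n) atTop (nhds 0)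

def approxSpec (T : H →L[ℂ] H) : Set ℂ := {l | ∃ x : ℕ → H, ApproxEig T l x}

def posType (J T : H →L[ℂ] H) : Set ℂ :=
  {l | l ∈ approxSpec T ∧ ∀ x : ℕ → H, ApproxEig T l x →
      0 < Filter.liminf (fun n => (inner ℂ (J (x n)) (x n) : ℂ).re) Filter.atTop}

lemma inner_J_pos_of_eig (J N : H →L[ℂ] H) (l : ℂ) (hl : l ∈ posType J N)
    (y : H) (hy : y ≠ 0) (hNy : N y = l • y) :
    0 < (inner ℂ (J y) y : ℂ).re := by
  obtain ⟨-, hpos⟩ := hl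
  have hny : ‖y‖ ≠ 0 := norm_ne_zero_iff.mpr hy
  set c : ℂ := (‖y‖ : ℂ)⁻¹ with hc
  have hseq : ApproxEig N l (fun _ => c • y) := by
    constructor
    · intro n
      simp [hc, norm_smul, norm_inv, inv_mul_cancel₀ hny]
    · have hz : ∀ n : ℕ, N (c • y) - l • (c • y) = 0 := by
        intro n
        rw [map_smul, hNy, smul_comm]
        simp
      have he : (fun _ : ℕ => N (c • y) - l • (c • y)) = fun _ : ℕ => (0 : H) :=
        funext hz
      rw [he]
      exact tendsto_const_nhds
  have h := hpos _ hseq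
  have hconst : (fun _ : ℕ => (inner ℂ (J (c • y)) (c • y) : ℂ).re)
      = fun _ : ℕ => (‖y‖⁻¹ * ‖y‖⁻¹) * (inner ℂ (J y) y : ℂ).re := by
    funext n
    rw [map_smul, inner_smul_left, inner_smul_right]
    simp [hc, Complex.ofReal_inv]
    ring
  rw [hconst, Filter.liminf_const] at h
  have hpo : 0 < ‖y‖⁻¹ * ‖y‖⁻¹ := by positivity
  nlinarith
lemma kadj_eig (J N : H →L[ℂ] H)
    (hJ : ContinuousLinearMap.adjoint J = J) (hJ2 : J ∘L J = 1)
    (hN : N ∘L kadj J N = kadj J N ∘L N)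
    (l : ℂ) (hl : l ∈ posType J N)
    (x : H) (hx : N x = l • x) : kadj J N x = (starRingEnd ℂ) l • x := by
  set y : H := kadj J N x - (starRingEnd ℂ) l • x with hy
  have hJ2' : ∀ v : H, J (J v) = v := by
    intro v
    have := congrFun (congrArg (fun T : H →L[ℂ] H => (T : H → H)) hJ2) v
    simpa using this
  have hcomm : ∀ v : H, N (kadj J N v) = kadj J N (N v) := by
    intro v
    have := congrFun (congrArg (fun T : H →L[ℂ] H => (T : H → H)) hN) v
    simpa using this
  have hNy : N y = l • y := by
    rw [hy, map_sub, map_smul, hcomm, hx, map_smul, smul_sub, smul_comm]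
  -- key identity: ⟨J y, z⟩ = ⟨J x, N z - l • z⟩
  have key : ∀ z : H, N z = l • z → (inner ℂ (J y) z : ℂ) = 0 := by
    intro z hz
    have h1 : (inner ℂ (J (kadj J N x)) z : ℂ) = inner ℂ (J x) (N z) := by
      show (inner ℂ (J (J ((ContinuousLinearMap.adjoint N) (J x)))) z : ℂ) = _
      rw [hJ2' ((ContinuousLinearMap.adjoint N) (J x)),
        ContinuousLinearMap.adjoint_inner_left]
    have : (inner ℂ (J y) z : ℂ)
        = inner ℂ (J x) (N z) - l * inner ℂ (J x) z := by
      rw [hy, map_sub, inner_sub_left, h1, map_smul, inner_smul_left]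
      simp
    rw [this, hz, inner_smul_right]
    ring
  have hy0 : y = 0 := by
    by_contra hne
    have hpos := inner_J_pos_of_eig J N l hl y hne hNy
    have := key y hNy
    rw [this] at hpos
    simp at hpos
  rw [hy] at hy0
  exact sub_eq_zero.mp hy0

lemma kadj_kadj (J N : H →L[ℂ] H)
    (hJ : ContinuousLinearMap.adjoint J = J) (hJ2 : J ∘L J = 1) :
    kadj J (kadj J N) = N := by
  unfold kadj
  rw [ContinuousLinearMap.adjoint_comp, ContinuousLinearMap.adjoint_comp,
    ContinuousLinearMap.adjoint_adjoint, hJ]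
  ext v
  simp only [ContinuousLinearMap.comp_apply]
  have hJ2' : ∀ w : H, J (J w) = w := by
    intro w
    have := congrFun (congrArg (fun T : H →L[ℂ] H => (T : H → H)) hJ2) w
    simpa using this
  rw [hJ2', hJ2']

theorem ker_eq_ker_of_twoSidedPosType (J N : H →L[ℂ] H)
    (hJ : ContinuousLinearMap.adjoint J = J) (hJ2 : J ∘L J = 1)
    (hN : N ∘L kadj J N = kadj J N ∘L N)
    (l : ℂ) (hl : l ∈ posType J N) (hl' : (starRingEnd ℂ) l ∈ posType J (kadj J N)) :
    ∀ x : H, N x = l • x ↔ kadj J N x = (starRingEnd ℂ) l • x := by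
  intro x
  constructor
  · exact kadj_eig J N hJ hJ2 hN l hl x
  · intro hx
    have hkk := kadj_kadj J N hJ hJ2
    have hN' : kadj J N ∘L kadj J (kadj J N) = kadj J (kadj J N) ∘L kadj J N := by
      rw [hkk]; exact hN.symm
    have := kadj_eig J (kadj J N) hJ hJ2 hN' ((starRingEnd ℂ) l) hl' x hx
    rwa [hkk, Complex.conj_conj] at this
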